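/- Let w : [0, T] → ℝ be Lipschitz with constant K > 0, and suppose w(τ) ≤ b for all τ ∈ [0,T], w(0) ≤ −m, and w(T) ≤ −m, where b > 0 and m > 0. Then ∫₀ᵀ w(τ)dτ ≤ φ(T), where φ(T) := ¼KT² − mT if KT < 2(b+m), and φ(T) := bT − (b+m)²/K if KT ≥ 2(b+m). -/

import Mathlib

open Set intervalIntegral

/-- The key integral estimate (Lemma `lem:5`, Case 4): if `w` is `K`-Lipschitz on
`[0,T]`, `w ≤ b` on `[0,T]`, and `w(0) ≤ -m`, `w(T) ≤ -m` with `b, m > 0`, then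
`∫₀ᵀ w ≤ φ(T)` where `φ(T) = ¼KT² - mT` if `KT < 2(b+m)` and
`φ(T) = bT - (b+m)²/K` otherwise. -/
theorem stmt_13 (w : ℝ → ℝ) (T K b m : ℝ)
    (hT : 0 ≤ T) (hK : 0 < K) (hb : 0 < b) (hm : 0 < m)
    (hLip : ∀ τ₁ ∈ Set.Icc 0 T, ∀ τ₂ ∈ Set.Icc 0 T, |w τ₁ - w τ₂| ≤ K * |τ₁ - τ₂|)
    (hwb : ∀ τ ∈ Set.Icc 0 T, w τ ≤ b)
    (hw0 : w 0 ≤ -m) (hwT : w T ≤ -m) :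
    (∫ τ in (0:ℝ)..T, w τ) ≤
      if K * T < 2 * (b + m) then K * T ^ 2 / 4 - m * T
      else b * T - (b + m) ^ 2 / K := by
  -- continuity of w on [0,T]
  have hcont : ContinuousOn w (Set.Icc 0 T) := by
    have : LipschitzOnWith (Real.toNNReal K) w (Set.Icc 0 T) := by
      rw [lipschitzOnWith_iff_dist_le_mul]
      intro x hx y hy
      simpa [Real.dist_eq, Real.coe_toNNReal _ hK.le] using hLip x hx y hy
    exact this.continuousOn
  have hInt : ∀ a' b' : ℝ, 0 ≤ a' → b' ≤ T → a' ≤ b' →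
      IntervalIntegrable w MeasureTheory.volume a' b' := by
    intro a' b' ha' hb' hab
    apply (hcont.mono _).intervalIntegrable
    rw [Set.uIcc_of_le hab]
    exact Set.Icc_subset_Icc ha' hb'
  -- affine integrals
  have haff : ∀ c d a' b' : ℝ, (∫ τ in a'..b', (c * τ + d)) =
      c * (b' ^ 2 - a' ^ 2) / 2 + d * (b' - a') := by
    intro c d a' b'
    rw [intervalIntegral.integral_add (f := fun x => c * x) (g := fun _ => d) ((continuous_const.mul continuous_id : Continuous fun x : ℝ => c * x).intervalIntegrable _ _)
      (intervalIntegrable_const), intervalIntegral.integral_const_mul, integral_id,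
      intervalIntegral.integral_const, smul_eq_mul]
    ring
  have hAffInt : ∀ c d a' b' : ℝ, IntervalIntegrable (fun τ => c * τ + d)
      MeasureTheory.volume a' b' :=
    fun c d a' b' => ((continuous_const.mul continuous_id).add continuous_const).intervalIntegrable _ _
  -- pointwise bounds
  have hlow : ∀ τ ∈ Set.Icc (0:ℝ) T, w τ ≤ K * τ + (-m) := by
    intro τ hτ
    have h := hLip τ hτ 0 ⟨le_refl 0, hT⟩
    rw [sub_zero, abs_of_nonneg hτ.1] at h
    have := abs_le.mp h
    linarith [this.2]
  have hhigh : ∀ τ ∈ Set.Icc (0:ℝ) T, w τ ≤ -K * τ + (K * T - m) := by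
    intro τ hτ
    have h := hLip τ hτ T ⟨hT, le_refl T⟩
    rw [abs_of_nonpos (by linarith [hτ.2] : τ - T ≤ 0)] at h
    have := abs_le.mp h
    linarith [this.2]
  by_cases hcase : K * T < 2 * (b + m)
  · rw [if_pos hcase]
    have hhalf : (0:ℝ) ≤ T / 2 := by linarith
    have hsplit : (∫ τ in (0:ℝ)..T, w τ) =
        (∫ τ in (0:ℝ)..(T/2), w τ) + ∫ τ in (T/2)..T, w τ :=
      (intervalIntegral.integral_add_adjacent_intervals
        (hInt 0 (T/2) le_rfl (by linarith) hhalf)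
        (hInt (T/2) T hhalf le_rfl (by linarith))).symm
    have h1 : (∫ τ in (0:ℝ)..(T/2), w τ) ≤ ∫ τ in (0:ℝ)..(T/2), (K * τ + (-m)) := by
      apply intervalIntegral.integral_mono_on hhalf
        (hInt 0 (T/2) le_rfl (by linarith) hhalf) (hAffInt _ _ _ _)
      intro τ hτ
      exact hlow τ ⟨hτ.1, by linarith [hτ.2]⟩
    have h2 : (∫ τ in (T/2)..T, w τ) ≤ ∫ τ in (T/2)..T, (-K * τ + (K * T - m)) := by
      apply intervalIntegral.integral_mono_on (by linarith)
        (hInt (T/2) T hhalf le_rfl (by linarith)) (hAffInt _ _ _ _)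
      intro τ hτ
      exact hhigh τ ⟨by linarith [hτ.1], hτ.2⟩
    rw [haff] at h1 h2
    rw [hsplit]
    nlinarith [h1, h2]
  · rw [if_neg hcase]
    push_neg at hcase
    set t0 : ℝ := (b + m) / K with ht0def
    have ht0pos : 0 < t0 := div_pos (by linarith) hK
    have hKt0 : K * t0 = b + m := by rw [ht0def]; field_simp
    have h2t0 : 2 * t0 ≤ T :=
      le_of_mul_le_mul_left (by nlinarith [hKt0]) hK
    have ht0T : t0 ≤ T - t0 := by linarith
    have hsplit : (∫ τ in (0:ℝ)..T, w τ) =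
        (∫ τ in (0:ℝ)..t0, w τ) + (∫ τ in t0..(T - t0), w τ) + ∫ τ in (T - t0)..T, w τ := by
      rw [intervalIntegral.integral_add_adjacent_intervals
        (hInt 0 t0 le_rfl (by linarith) ht0pos.le)
        (hInt t0 (T - t0) ht0pos.le (by linarith) ht0T),
        intervalIntegral.integral_add_adjacent_intervals
        (hInt 0 (T - t0) le_rfl (by linarith) (by linarith))
        (hInt (T - t0) T (by linarith) le_rfl (by linarith))]
    have h1 : (∫ τ in (0:ℝ)..t0, w τ) ≤ ∫ τ in (0:ℝ)..t0, (K * τ + (-m)) := by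
      apply intervalIntegral.integral_mono_on ht0pos.le
        (hInt 0 t0 le_rfl (by linarith) ht0pos.le) (hAffInt _ _ _ _)
      intro τ hτ
      exact hlow τ ⟨hτ.1, by linarith [hτ.2]⟩
    have h2 : (∫ τ in t0..(T - t0), w τ) ≤ ∫ τ in t0..(T - t0), ((0:ℝ) * τ + b) := by
      apply intervalIntegral.integral_mono_on ht0T
        (hInt t0 (T - t0) ht0pos.le (by linarith) ht0T) (hAffInt _ _ _ _)
      intro τ hτ
      simpa using hwb τ ⟨by linarith [hτ.1], by linarith [hτ.2]⟩
    have h3 : (∫ τ in (T - t0)..T, w τ) ≤ ∫ τ in (T - t0)..T, (-K * τ + (K * T - m)) := by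
      apply intervalIntegral.integral_mono_on (by linarith)
        (hInt (T - t0) T (by linarith) le_rfl (by linarith)) (hAffInt _ _ _ _)
      intro τ hτ
      exact hhigh τ ⟨by linarith [hτ.1], hτ.2⟩
    rw [hsplit]
    rw [haff] at h1 h2 h3
    have hgoal : b * T - (b + m) ^ 2 / K = b * T - t0 * (b + m) := by
      rw [ht0def]; field_simp
    rw [hgoal]
    nlinarith [h1, h2, h3, hKt0]
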